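/- Assume symmetric reliability requirements (τ = 1) with δ = 1 and 1 < c_A ≤ c_B. Then in every graph G on V that is pairwise stable under the reliable cost, every two distinct vertices i, j are joined by two edge-disjoint paths, and g_G(i,j) ≤ 4 + 4·c_B; in particular each of the two cost-minimizing edge-disjoint path lengths between i and j is at most 2 + 2·c_B. By contrast, with asymmetric requirements (τ = 0) there exist pairwise-stable graphs in which some pair of nodes is not joined by two edge-disjoint paths. -/
import Mathlib


open SimpleGraph Classical
open scoped ENNReal

noncomputable section

variable {V : Type*} [Fintype V] [DecidableEq V]

/-- The degree of node `i` in `G`. -/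
def degE (G : SimpleGraph V) (i : V) : ℕ := (G.neighborSet i).ncard

/-- The hop distance between `i` and `j`, with value `+∞` for unreachable pairs. -/
def dE (G : SimpleGraph V) (i j : V) : ℝ≥0∞ :=
  if G.Reachable i j then (G.dist i j : ℝ≥0∞) else ⊤

/-- `g_G(i,j)`: the minimum of `length p + length q` over pairs `(p, q)` of
edge-disjoint `i`–`j` paths (equivalently, the length of a shortest cycle through `i`
and `j`), with value `+∞` if no such pair exists. -/
def gdist (G : SimpleGraph V) (i j : V) : ℝ≥0∞ :=
  sInf {n : ℝ≥0∞ | ∃ p q : G.Path i j,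
    (∀ e ∈ (p : G.Walk i j).edges, e ∉ (q : G.Walk i j).edges) ∧
    n = ((p : G.Walk i j).length : ℝ≥0∞) + ((q : G.Walk i j).length : ℝ≥0∞)}

/-- `G` with the edge `ij` removed. -/
def delE (G : SimpleGraph V) (i j : V) : SimpleGraph V := G.deleteEdges {s(i, j)}

/-- `G` with the edge `ij` added. -/
def addE (G : SimpleGraph V) (i j : V) : SimpleGraph V := G ⊔ edge i j

/-- The reliable cost of node `i` under symmetric reliability requirements (`τ = 1`)
with failure weight `δ = 1`. -/
def costRel (TA : Finset V) (A cA cB : ℝ) (G : SimpleGraph V) (i : V) : ℝ≥0∞ :=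
  (degE G i : ℝ≥0∞) * ENNReal.ofReal (if i ∈ TA then cA else cB)
    + ENNReal.ofReal (A / 2) * ∑ j ∈ TA.erase i, gdist G i j
    + ENNReal.ofReal (1 / 2) * ∑ j ∈ TAᶜ.erase i, gdist G i j

/-- Pairwise stability for the reliable model: removing any present edge strictly
increases the reliable cost of both endpoints, and adding any absent edge strictly
increases the reliable cost of at least one endpoint. -/
def PairwiseStableRel (TA : Finset V) (A cA cB : ℝ) (G : SimpleGraph V) : Prop :=
  (∀ i j : V, G.Adj i j →
    costRel TA A cA cB G i < costRel TA A cA cB (delE G i j) i ∧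
    costRel TA A cA cB G j < costRel TA A cA cB (delE G i j) j) ∧
  (∀ i j : V, i ≠ j → ¬ G.Adj i j →
    costRel TA A cA cB G i < costRel TA A cA cB (addE G i j) i ∨
    costRel TA A cA cB G j < costRel TA A cA cB (addE G i j) j)

/-- The reliable cost of node `i` under *asymmetric* reliability requirements (`τ = 0`)
with failure weight `δ = 1`: the type-B sum uses the ordinary distance `d_G(i,j)`. -/
def costRel0 (TA : Finset V) (A cA cB : ℝ) (G : SimpleGraph V) (i : V) : ℝ≥0∞ :=
  (degE G i : ℝ≥0∞) * ENNReal.ofReal (if i ∈ TA then cA else cB)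
    + ENNReal.ofReal (A / 2) * ∑ j ∈ TA.erase i, gdist G i j
    + ∑ j ∈ TAᶜ.erase i, dE G i j

/-- Pairwise stability for the asymmetric (`τ = 0`) reliable model. -/
def PairwiseStableRel0 (TA : Finset V) (A cA cB : ℝ) (G : SimpleGraph V) : Prop :=
  (∀ i j : V, G.Adj i j →
    costRel0 TA A cA cB G i < costRel0 TA A cA cB (delE G i j) i ∧
    costRel0 TA A cA cB G j < costRel0 TA A cA cB (delE G i j) j) ∧
  (∀ i j : V, i ≠ j → ¬ G.Adj i j →
    costRel0 TA A cA cB G i < costRel0 TA A cA cB (addE G i j) i ∨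
    costRel0 TA A cA cB G j < costRel0 TA A cA cB (addE G i j) j)



lemma gdist_le_pair {G : SimpleGraph V} {i j : V} (p q : G.Path i j)
    (h : ∀ e ∈ (p : G.Walk i j).edges, e ∉ (q : G.Walk i j).edges) :
    gdist G i j ≤ ((p : G.Walk i j).length : ℝ≥0∞) + ((q : G.Walk i j).length : ℝ≥0∞) :=
  sInf_le ⟨p, q, h, rfl⟩

lemma gdist_attain {G : SimpleGraph V} {i j : V} (h : gdist G i j ≠ ⊤) :
    ∃ p q : G.Path i j,
      (∀ e ∈ (p : G.Walk i j).edges, e ∉ (q : G.Walk i j).edges) ∧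
      ((p : G.Walk i j).length : ℝ≥0∞) + ((q : G.Walk i j).length : ℝ≥0∞) = gdist G i j := by
  classical
  set S := {n : ℝ≥0∞ | ∃ p q : G.Path i j,
    (∀ e ∈ (p : G.Walk i j).edges, e ∉ (q : G.Walk i j).edges) ∧
    n = ((p : G.Walk i j).length : ℝ≥0∞) + ((q : G.Walk i j).length : ℝ≥0∞)} with hS
  have hne : S.Nonempty := by
    by_contra hcon
    rw [Set.not_nonempty_iff_eq_empty] at hcon
    apply h
    rw [gdist, ← hS, hcon, sInf_empty]
  set T : Set ℕ := {n : ℕ | (n : ℝ≥0∞) ∈ S} with hT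
  have hTne : T.Nonempty := by
    obtain ⟨x, p, q, hd, hx⟩ := hne
    refine ⟨(p : G.Walk i j).length + (q : G.Walk i j).length, ?_⟩
    refine ⟨p, q, hd, ?_⟩
    push_cast
    rfl
  obtain ⟨p, q, hd, hm⟩ := Nat.sInf_mem hTne
  have h1 : gdist G i j ≤ ((sInf T : ℕ) : ℝ≥0∞) := sInf_le ⟨p, q, hd, hm⟩
  have h2 : ((sInf T : ℕ) : ℝ≥0∞) ≤ gdist G i j := by
    apply le_sInf
    rintro b ⟨p', q', hd', rfl⟩
    have : ((p' : G.Walk i j).length + (q' : G.Walk i j).length) ∈ T := by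
      refine ⟨p', q', hd', by push_cast; rfl⟩
    calc ((sInf T : ℕ) : ℝ≥0∞) ≤ (((p' : G.Walk i j).length + (q' : G.Walk i j).length : ℕ) : ℝ≥0∞) :=
          Nat.cast_le.mpr (Nat.sInf_le this)
      _ = _ := by push_cast; rfl
  exact ⟨p, q, hd, by rw [← hm]; exact le_antisymm h2 h1⟩

lemma gdist_nat {G : SimpleGraph V} {i j : V} (h : gdist G i j ≠ ⊤) :
    ∃ n : ℕ, gdist G i j = (n : ℝ≥0∞) := by
  obtain ⟨p, q, _, hsum⟩ := gdist_attain h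
  exact ⟨(p : G.Walk i j).length + (q : G.Walk i j).length, by rw [← hsum]; push_cast; rfl⟩

lemma gdist_comm (G : SimpleGraph V) (i j : V) : gdist G i j = gdist G j i := by
  have key : ∀ u v : V, gdist G u v ≤ gdist G v u := by
    intro u v
    apply le_sInf
    rintro b ⟨p, q, hd, rfl⟩
    have hd' : ∀ e ∈ (p.reverse : G.Walk u v).edges, e ∉ (q.reverse : G.Walk u v).edges := by
      intro e he hq
      simp only [Path.reverse, Walk.edges_reverse, List.mem_reverse] at he hq
      exact hd e he hq
    calc gdist G u v ≤ _ := gdist_le_pair p.reverse q.reverse hd'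
      _ = _ := by simp [Path.reverse]
  exact le_antisymm (key i j) (key j i)

lemma gdist_anti {G G' : SimpleGraph V} (h : G ≤ G') (i j : V) :
    gdist G' i j ≤ gdist G i j := by
  apply le_sInf
  rintro b ⟨p, q, hd, rfl⟩
  have hp : ∀ e ∈ (p : G.Walk i j).edges, e ∈ G'.edgeSet :=
    fun e he => edgeSet_mono h ((p : G.Walk i j).edges_subset_edgeSet he)
  have hq : ∀ e ∈ (q : G.Walk i j).edges, e ∈ G'.edgeSet :=
    fun e he => edgeSet_mono h ((q : G.Walk i j).edges_subset_edgeSet he)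
  have hd' : ∀ e ∈ ((p : G.Walk i j).transfer G' hp).edges,
      e ∉ ((q : G.Walk i j).transfer G' hq).edges := by
    rw [Walk.edges_transfer, Walk.edges_transfer]
    exact hd
  calc gdist G' i j ≤ _ :=
        gdist_le_pair ⟨(p : G.Walk i j).transfer G' hp, p.2.transfer hp⟩
          ⟨(q : G.Walk i j).transfer G' hq, q.2.transfer hq⟩ hd'
    _ = _ := by simp [Walk.length_transfer]

lemma gdist_reachable {G : SimpleGraph V} {i j : V} (h : gdist G i j ≠ ⊤) :
    G.Reachable i j := by
  obtain ⟨p, _, _, _⟩ := gdist_attain h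
  exact ⟨(p : G.Walk i j)⟩

-- ### cost basics

lemma costRel_eq_top {TA : Finset V} {A cA cB : ℝ} (hA : 1 < A)
    {G : SimpleGraph V} {i j : V} (hne : j ≠ i)
    (h : gdist G i j = ⊤) : costRel TA A cA cB G i = ⊤ := by
  rw [costRel]
  by_cases hj : j ∈ TA
  · have hmem : j ∈ TA.erase i := Finset.mem_erase.mpr ⟨hne, hj⟩
    have hsum : ∑ k ∈ TA.erase i, gdist G i k = ⊤ :=
      ENNReal.sum_eq_top.mpr ⟨j, hmem, h⟩
    have hα : ENNReal.ofReal (A / 2) ≠ 0 :=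
      (ENNReal.ofReal_pos.mpr (by linarith)).ne'
    rw [hsum, ENNReal.mul_top hα]
    simp
  · have hmem : j ∈ TAᶜ.erase i := Finset.mem_erase.mpr ⟨hne, Finset.mem_compl.mpr hj⟩
    have hsum : ∑ k ∈ TAᶜ.erase i, gdist G i k = ⊤ :=
      ENNReal.sum_eq_top.mpr ⟨j, hmem, h⟩
    have hβ : ENNReal.ofReal (1 / 2) ≠ 0 :=
      (ENNReal.ofReal_pos.mpr (by norm_num)).ne'
    rw [hsum, ENNReal.mul_top hβ]
    simp


lemma gdist_ne_top_of_stable {TA : Finset V} {A cA cB : ℝ} (hA : 1 < A)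
    {G : SimpleGraph V} (hst : PairwiseStableRel TA A cA cB G) :
    ∀ i j : V, i ≠ j → gdist G i j ≠ ⊤ := by
  intro i j hij h
  by_cases hn : ∃ k, G.Adj i k
  · obtain ⟨k, hk⟩ := hn
    have h1 := (hst.1 i k hk).1
    rw [costRel_eq_top hA hij.symm h] at h1
    exact not_top_lt h1
  · push_neg at hn
    rcases hst.2 i j hij (hn j) with h1 | h1
    · rw [costRel_eq_top hA hij.symm h] at h1
      exact not_top_lt h1
    · have h' : gdist G j i = ⊤ := by rw [gdist_comm]; exact h
      rw [costRel_eq_top hA hij h'] at h1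
      exact not_top_lt h1

lemma addE_comm (G : SimpleGraph V) (i j : V) : addE G i j = addE G j i := by
  unfold addE SimpleGraph.edge
  rw [Sym2.eq_swap]

lemma adj_addE {G : SimpleGraph V} {i j : V} (hij : i ≠ j) : (addE G i j).Adj i j := by
  rw [addE, sup_adj, edge_adj]
  exact Or.inr ⟨Or.inl ⟨rfl, rfl⟩, hij⟩

lemma degE_addE {G : SimpleGraph V} {i j : V} (hij : i ≠ j) (h : ¬ G.Adj i j) :
    degE (addE G i j) i = degE G i + 1 := by
  have hset : (addE G i j).neighborSet i = insert j (G.neighborSet i) := by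
    ext x
    simp only [mem_neighborSet, addE, sup_adj, edge_adj, Set.mem_insert_iff]
    constructor
    · rintro (hx | ⟨h1, hne⟩)
      · exact Or.inr hx
      · rcases h1 with ⟨-, rfl⟩ | ⟨rfl, rfl⟩
        · exact Or.inl rfl
        · exact absurd rfl hne
    · rintro (rfl | hx)
      · exact Or.inr ⟨Or.inl ⟨by trivial, rfl⟩, hij⟩
      · exact Or.inl hx
  rw [degE, hset, Set.ncard_insert_of_notMem (by simpa [mem_neighborSet] using h)
    (G.neighborSet i).toFinite]
  rfl

/-- The key extraction lemma: from a strict cost increase upon adding one edge at `i`,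
derive a bound relating `gdist G i j` and `gdist G' i j`. -/
lemma extract {TA : Finset V} {A cA cB : ℝ} (hA : 1 < A) (hcA : 1 < cA) (hAB : cA ≤ cB)
    {G G' : SimpleGraph V} (hle : G ≤ G') {i j : V} (hij : j ≠ i)
    (hdeg : degE G' i = degE G i + 1)
    (hfin : ∀ k, k ≠ i → gdist G i k ≠ ⊤)
    (hlt : costRel TA A cA cB G i < costRel TA A cA cB G' i) :
    ∃ n n' : ℕ, gdist G i j = (n : ℝ≥0∞) ∧ gdist G' i j = (n' : ℝ≥0∞) ∧
      (n : ℝ) < 2 * cB + n' := by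
  obtain ⟨n, hn⟩ := gdist_nat (hfin j hij)
  have hg' : gdist G' i j ≠ ⊤ := by
    intro htop
    exact hfin j hij (top_le_iff.mp (htop ▸ gdist_anti hle i j))
  obtain ⟨n', hn'⟩ := gdist_nat hg'
  refine ⟨n, n', hn, hn', ?_⟩
  set c : ℝ := if i ∈ TA then cA else cB with hc
  have hc1 : 1 < c := by rw [hc]; split <;> linarith
  have hcB : c ≤ cB := by rw [hc]; split <;> linarith
  have hcB1 : 1 < cB := lt_of_lt_of_le hcA hAB
  -- finiteness of auxiliary quantities
  have hsum_fin : ∀ (s : Finset V), (∀ k ∈ s, k ≠ i) → ∑ k ∈ s, gdist G i k ≠ ⊤ := by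
    intro s hs htop
    obtain ⟨k, hks, hk⟩ := ENNReal.sum_eq_top.mp htop
    exact hfin k (hs k hks) hk
  -- the two sub-cases according to the type of j
  by_cases hjA : j ∈ TA
  · have hjm : j ∈ TA.erase i := Finset.mem_erase.mpr ⟨hij, hjA⟩
    have hSA : ∑ k ∈ TA.erase i, gdist G i k
        = gdist G i j + ∑ k ∈ (TA.erase i).erase j, gdist G i k :=
      (Finset.add_sum_erase _ _ hjm).symm
    have hSA' : ∑ k ∈ TA.erase i, gdist G' i k
        = gdist G' i j + ∑ k ∈ (TA.erase i).erase j, gdist G' i k :=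
      (Finset.add_sum_erase _ _ hjm).symm
    have hRA : ∑ k ∈ (TA.erase i).erase j, gdist G' i k
        ≤ ∑ k ∈ (TA.erase i).erase j, gdist G i k :=
      Finset.sum_le_sum fun k _ => gdist_anti hle i k
    have hSB : ∑ k ∈ TAᶜ.erase i, gdist G' i k ≤ ∑ k ∈ TAᶜ.erase i, gdist G i k :=
      Finset.sum_le_sum fun k _ => gdist_anti hle i k
    set α : ℝ≥0∞ := ENNReal.ofReal (A / 2) with hα
    set β : ℝ≥0∞ := ENNReal.ofReal (1 / 2) with hβ
    set RA : ℝ≥0∞ := ∑ k ∈ (TA.erase i).erase j, gdist G i k with hRAdef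
    set SB : ℝ≥0∞ := ∑ k ∈ TAᶜ.erase i, gdist G i k with hSBdef
    set K : ℝ≥0∞ := (degE G i : ℝ≥0∞) * ENNReal.ofReal c + α * RA + β * SB with hK
    have hKfin : K ≠ ⊤ := by
      rw [hK]
      refine ENNReal.add_ne_top.mpr ⟨ENNReal.add_ne_top.mpr ⟨?_, ?_⟩, ?_⟩
      · exact ENNReal.mul_ne_top (ENNReal.natCast_ne_top _) ENNReal.ofReal_ne_top
      · exact ENNReal.mul_ne_top ENNReal.ofReal_ne_top
          (hsum_fin _ (fun k hk => Finset.ne_of_mem_erase (Finset.mem_of_mem_erase hk)))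
      · exact ENNReal.mul_ne_top ENNReal.ofReal_ne_top
          (hsum_fin _ (fun k hk => Finset.ne_of_mem_erase hk))
    have hmain : α * gdist G i j + K < (ENNReal.ofReal c + α * gdist G' i j) + K := by
      calc α * gdist G i j + K
          = costRel TA A cA cB G i := by
            rw [costRel, hK, hSA, ← hc]; ring
        _ < costRel TA A cA cB G' i := hlt
        _ ≤ (ENNReal.ofReal c + α * gdist G' i j) + K := by
            rw [costRel, hdeg, hSA', ← hc, hK]
            push_cast
            calc ((degE G i : ℝ≥0∞) + 1) * ENNReal.ofReal c
                  + α * (gdist G' i j + ∑ k ∈ (TA.erase i).erase j, gdist G' i k)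
                  + β * ∑ k ∈ TAᶜ.erase i, gdist G' i k
                ≤ ((degE G i : ℝ≥0∞) + 1) * ENNReal.ofReal c
                  + α * (gdist G' i j + RA) + β * SB := by
                  gcongr
              _ = (ENNReal.ofReal c + α * gdist G' i j) + K := by rw [hK]; ring
    have hkey : α * gdist G i j < ENNReal.ofReal c + α * gdist G' i j :=
      (ENNReal.add_lt_add_iff_right hKfin).mp hmain
    rw [hn, hn'] at hkey
    have hA2 : (0:ℝ) ≤ A / 2 := by linarith
    have hcast : ∀ m : ℕ, (m : ℝ≥0∞) = ENNReal.ofReal (m : ℝ) := by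
      intro m; rw [ENNReal.ofReal_natCast]
    rw [hcast n, hcast n', ← ENNReal.ofReal_mul hA2, ← ENNReal.ofReal_mul hA2,
      ← ENNReal.ofReal_add (by linarith) (by positivity)] at hkey
    have hreal : A / 2 * n < c + A / 2 * n' :=
      (ENNReal.ofReal_lt_ofReal_iff_of_nonneg (by positivity)).mp hkey
    rcases le_or_gt (n : ℝ) (n' : ℝ) with hle' | hlt'
    · linarith
    · nlinarith [hlt', hA, hreal, hcB]
  · have hjm : j ∈ TAᶜ.erase i := Finset.mem_erase.mpr ⟨hij, Finset.mem_compl.mpr hjA⟩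
    have hSA : ∑ k ∈ TAᶜ.erase i, gdist G i k
        = gdist G i j + ∑ k ∈ (TAᶜ.erase i).erase j, gdist G i k :=
      (Finset.add_sum_erase _ _ hjm).symm
    have hSA' : ∑ k ∈ TAᶜ.erase i, gdist G' i k
        = gdist G' i j + ∑ k ∈ (TAᶜ.erase i).erase j, gdist G' i k :=
      (Finset.add_sum_erase _ _ hjm).symm
    have hRA : ∑ k ∈ (TAᶜ.erase i).erase j, gdist G' i k
        ≤ ∑ k ∈ (TAᶜ.erase i).erase j, gdist G i k :=
      Finset.sum_le_sum fun k _ => gdist_anti hle i k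
    have hSB : ∑ k ∈ TA.erase i, gdist G' i k ≤ ∑ k ∈ TA.erase i, gdist G i k :=
      Finset.sum_le_sum fun k _ => gdist_anti hle i k
    set α : ℝ≥0∞ := ENNReal.ofReal (1 / 2) with hα
    set β : ℝ≥0∞ := ENNReal.ofReal (A / 2) with hβ
    set RA : ℝ≥0∞ := ∑ k ∈ (TAᶜ.erase i).erase j, gdist G i k with hRAdef
    set SB : ℝ≥0∞ := ∑ k ∈ TA.erase i, gdist G i k with hSBdef
    set K : ℝ≥0∞ := (degE G i : ℝ≥0∞) * ENNReal.ofReal c + α * RA + β * SB with hK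
    have hKfin : K ≠ ⊤ := by
      rw [hK]
      refine ENNReal.add_ne_top.mpr ⟨ENNReal.add_ne_top.mpr ⟨?_, ?_⟩, ?_⟩
      · exact ENNReal.mul_ne_top (ENNReal.natCast_ne_top _) ENNReal.ofReal_ne_top
      · exact ENNReal.mul_ne_top ENNReal.ofReal_ne_top
          (hsum_fin _ (fun k hk => Finset.ne_of_mem_erase (Finset.mem_of_mem_erase hk)))
      · exact ENNReal.mul_ne_top ENNReal.ofReal_ne_top
          (hsum_fin _ (fun k hk => Finset.ne_of_mem_erase hk))
    have hmain : α * gdist G i j + K < (ENNReal.ofReal c + α * gdist G' i j) + K := by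
      calc α * gdist G i j + K
          = costRel TA A cA cB G i := by
            rw [costRel, hK, hSA, ← hc]; ring
        _ < costRel TA A cA cB G' i := hlt
        _ ≤ (ENNReal.ofReal c + α * gdist G' i j) + K := by
            rw [costRel, hdeg, hSA', ← hc, hK]
            push_cast
            calc ((degE G i : ℝ≥0∞) + 1) * ENNReal.ofReal c
                  + β * ∑ k ∈ TA.erase i, gdist G' i k
                  + α * (gdist G' i j + ∑ k ∈ (TAᶜ.erase i).erase j, gdist G' i k)
                ≤ ((degE G i : ℝ≥0∞) + 1) * ENNReal.ofReal c
                  + β * SB + α * (gdist G' i j + RA) := by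
                  gcongr
              _ = (ENNReal.ofReal c + α * gdist G' i j) + K := by rw [hK]; ring
    have hkey : α * gdist G i j < ENNReal.ofReal c + α * gdist G' i j :=
      (ENNReal.add_lt_add_iff_right hKfin).mp hmain
    rw [hn, hn'] at hkey
    have hA2 : (0:ℝ) ≤ 1 / 2 := by norm_num
    have hcast : ∀ m : ℕ, (m : ℝ≥0∞) = ENNReal.ofReal (m : ℝ) := by
      intro m; rw [ENNReal.ofReal_natCast]
    rw [hcast n, hcast n', ← ENNReal.ofReal_mul hA2, ← ENNReal.ofReal_mul hA2,
      ← ENNReal.ofReal_add (by linarith) (by positivity)] at hkey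
    have hreal : 1 / 2 * n < c + 1 / 2 * n' :=
      (ENNReal.ofReal_lt_ofReal_iff_of_nonneg (by positivity)).mp hkey
    linarith

lemma nonadj_bound {TA : Finset V} {A cA cB : ℝ} (hA : 1 < A) (hcA : 1 < cA) (hAB : cA ≤ cB)
    {G : SimpleGraph V} (hst : PairwiseStableRel TA A cA cB G)
    {i j : V} (hij : i ≠ j) (hnadj : ¬ G.Adj i j) :
    ∃ n : ℕ, gdist G i j = (n : ℝ≥0∞) ∧ (n : ℝ) < 2 * cB + 1 + G.dist i j := by
  have hfin := gdist_ne_top_of_stable hA hst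
  have hreach : G.Reachable i j := gdist_reachable (hfin i j hij)
  obtain ⟨P, hPpath, hPlen⟩ := hreach.exists_path_of_dist
  have hadj' : (addE G i j).Adj i j := adj_addE hij
  have hPle : ∀ e ∈ P.edges, e ∈ (addE G i j).edgeSet :=
    fun e he => edgeSet_mono le_sup_left (P.edges_subset_edgeSet he)
  have hdisj : ∀ e ∈ ((Path.singleton hadj' : (addE G i j).Path i j) :
      (addE G i j).Walk i j).edges, e ∉ (P.transfer _ hPle).edges := by
    intro e he hq
    rw [Walk.edges_transfer] at hq
    simp only [Path.singleton, Walk.edges_cons, Walk.edges_nil, List.mem_singleton] at he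
    subst he
    exact hnadj (by simpa using P.edges_subset_edgeSet hq)
  have hub : gdist (addE G i j) i j ≤ ((1 + G.dist i j : ℕ) : ℝ≥0∞) := by
    have h1 := gdist_le_pair (Path.singleton hadj')
      ⟨P.transfer _ hPle, hPpath.transfer hPle⟩ hdisj
    calc gdist (addE G i j) i j ≤ _ := h1
      _ = ((1 + G.dist i j : ℕ) : ℝ≥0∞) := by
        simp [Path.singleton, Walk.length_transfer, hPlen]
  rcases hst.2 i j hij hnadj with h1 | h1
  · obtain ⟨n, n', hn, hn', hr⟩ := extract hA hcA hAB (le_sup_left : G ≤ addE G i j) hij.symm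
      (degE_addE hij hnadj) (fun k hk => hfin i k (Ne.symm hk)) h1
    have hnat : n' ≤ 1 + G.dist i j := by
      have h3 : (n' : ℝ≥0∞) ≤ ((1 + G.dist i j : ℕ) : ℝ≥0∞) := le_of_eq_of_le hn'.symm hub
      exact_mod_cast h3
    refine ⟨n, hn, ?_⟩
    have h2 : (n' : ℝ) ≤ 1 + (G.dist i j : ℝ) := by exact_mod_cast hnat
    linarith
  · have hdeg : degE (addE G i j) j = degE G j + 1 := by
      rw [addE_comm]
      exact degE_addE hij.symm (fun h => hnadj h.symm)
    obtain ⟨n, n', hn, hn', hr⟩ := extract hA hcA hAB (le_sup_left : G ≤ addE G i j) hij hdeg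
      (fun k hk => hfin j k (Ne.symm hk)) h1
    have hn2 : gdist G i j = (n : ℝ≥0∞) := by rw [gdist_comm]; exact hn
    have hn'2 : gdist (addE G i j) i j = (n' : ℝ≥0∞) := by rw [gdist_comm]; exact hn'
    have hnat : n' ≤ 1 + G.dist i j := by
      rw [hn'2] at hub
      exact_mod_cast hub
    refine ⟨n, hn2, ?_⟩
    have h2 : (n' : ℝ) ≤ 1 + (G.dist i j : ℝ) := by exact_mod_cast hnat
    linarith

lemma nonadj_pair {TA : Finset V} {A cA cB : ℝ} (hA : 1 < A) (hcA : 1 < cA) (hAB : cA ≤ cB)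
    {G : SimpleGraph V} (hst : PairwiseStableRel TA A cA cB G)
    {i j : V} (hij : i ≠ j) (hnadj : ¬ G.Adj i j) :
    ∃ (p q : G.Path i j) (n : ℕ),
      (∀ e ∈ (p : G.Walk i j).edges, e ∉ (q : G.Walk i j).edges) ∧
      ((p : G.Walk i j).length : ℝ≥0∞) + ((q : G.Walk i j).length : ℝ≥0∞) = gdist G i j ∧
      gdist G i j = (n : ℝ≥0∞) ∧ (n : ℝ) < 2 * cB + 1 + G.dist i j ∧
      ((p : G.Walk i j).length : ℝ) < 2 * cB + 1 ∧
      ((q : G.Walk i j).length : ℝ) < 2 * cB + 1 := by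
  obtain ⟨n, hn, hb⟩ := nonadj_bound hA hcA hAB hst hij hnadj
  obtain ⟨p, q, hd, hsum⟩ := gdist_attain (by rw [hn]; exact ENNReal.natCast_ne_top n)
  have hlen : (p : G.Walk i j).length + (q : G.Walk i j).length = n := by
    have := hsum.trans hn
    exact_mod_cast this
  have hd1 : G.dist i j ≤ (p : G.Walk i j).length := dist_le _
  have hd2 : G.dist i j ≤ (q : G.Walk i j).length := dist_le _
  refine ⟨p, q, n, hd, hsum, hn, hb, ?_, ?_⟩
  · have h1 : ((p : G.Walk i j).length : ℝ) + ((q : G.Walk i j).length : ℝ) = n := by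
      exact_mod_cast hlen
    have h2 : (G.dist i j : ℝ) ≤ ((q : G.Walk i j).length : ℝ) := by exact_mod_cast hd2
    linarith
  · have h1 : ((p : G.Walk i j).length : ℝ) + ((q : G.Walk i j).length : ℝ) = n := by
      exact_mod_cast hlen
    have h2 : (G.dist i j : ℝ) ≤ ((p : G.Walk i j).length : ℝ) := by exact_mod_cast hd1
    linarith

lemma split_bound {G : SimpleGraph V} {u j i : V}
    {p q : G.Walk u j} (hp : p.IsPath) (hq : q.IsPath)
    (hd : ∀ e ∈ p.edges, e ∉ q.edges) (hi : i ∈ p.support) :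
    gdist G i j ≤ ((p.length + q.length : ℕ) : ℝ≥0∞) := by
  classical
  have hspec : (p.takeUntil i hi).append (p.dropUntil i hi) = p := p.take_spec hi
  have hp1 : (p.takeUntil i hi).IsPath := hp.takeUntil hi
  have hp2 : (p.dropUntil i hi).IsPath := hp.dropUntil hi
  set w := (p.takeUntil i hi).reverse.append q with hw
  have hQpath : w.bypass.IsPath := Walk.bypass_isPath _
  have hedges : p.edges = (p.takeUntil i hi).edges ++ (p.dropUntil i hi).edges := by
    conv_lhs => rw [← hspec]
    rw [Walk.edges_append]
  have hnd : ((p.takeUntil i hi).edges ++ (p.dropUntil i hi).edges).Nodup := by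
    rw [← hedges]; exact hp.isTrail.edges_nodup
  have hdisj12 : ∀ e ∈ (p.dropUntil i hi).edges, e ∉ (p.takeUntil i hi).edges :=
    fun e he h1 => List.disjoint_of_nodup_append hnd h1 he
  have hdisj : ∀ e ∈ (p.dropUntil i hi).edges, e ∉ w.bypass.edges := by
    intro e he hmem
    have hmem2 : e ∈ w.edges := Walk.edges_bypass_subset _ hmem
    rw [hw, Walk.edges_append, Walk.edges_reverse] at hmem2
    rcases List.mem_append.mp hmem2 with h1 | h1
    · exact hdisj12 e he (List.mem_reverse.mp h1)
    · exact hd e (hedges ▸ List.mem_append_right _ he) h1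
  have hlen : (p.dropUntil i hi).length + w.bypass.length ≤ p.length + q.length := by
    have h1 : w.bypass.length ≤ w.length := Walk.length_bypass_le _
    have h2 : w.length = (p.takeUntil i hi).length + q.length := by
      rw [hw, Walk.length_append, Walk.length_reverse]
    have h3 : (p.takeUntil i hi).length + (p.dropUntil i hi).length = p.length := by
      conv_rhs => rw [← hspec]
      rw [Walk.length_append]
    omega
  calc gdist G i j ≤ _ :=
        gdist_le_pair ⟨p.dropUntil i hi, hp2⟩ ⟨w.bypass, hQpath⟩ hdisj
    _ ≤ ((p.length + q.length : ℕ) : ℝ≥0∞) := by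
        rw [show ((p.dropUntil i hi).length : ℝ≥0∞) + (w.bypass.length : ℝ≥0∞)
          = (((p.dropUntil i hi).length + w.bypass.length : ℕ) : ℝ≥0∞) by push_cast; rfl]
        exact_mod_cast hlen

lemma adj_bound {TA : Finset V} {A cA cB : ℝ} (hA : 1 < A) (hcA : 1 < cA) (hAB : cA ≤ cB)
    {G : SimpleGraph V} (hst : PairwiseStableRel TA A cA cB G)
    {i j : V} (hij : i ≠ j) (hadj : G.Adj i j) :
    ∃ m : ℕ, gdist G i j = (m : ℝ≥0∞) ∧ (m : ℝ) < 2 * cB + 3 := by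
  classical
  have hcB1 : 1 < cB := lt_of_lt_of_le hcA hAB
  have hfin := gdist_ne_top_of_stable hA hst
  obtain ⟨m, hm⟩ := gdist_nat (hfin i j hij)
  refine ⟨m, hm, ?_⟩
  set G' : SimpleGraph V := G.deleteEdges {s(i, j)} with hG'
  have hle' : G' ≤ G := SimpleGraph.deleteEdges_le _
  -- find a path avoiding the edge ij
  obtain ⟨p, q, hdisj, hsum⟩ := gdist_attain (hfin i j hij)
  have hex : ∃ r : G.Walk i j, r.IsPath ∧ s(i, j) ∉ r.edges := by
    by_cases hp : s(i, j) ∈ (p : G.Walk i j).edges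
    · exact ⟨q, q.2, hdisj _ hp⟩
    · exact ⟨p, p.2, hp⟩
  obtain ⟨r, hrpath, hre⟩ := hex
  have hrG' : ∀ e ∈ r.edges, e ∈ G'.edgeSet := by
    intro e he
    rw [hG', edgeSet_deleteEdges]
    refine ⟨r.edges_subset_edgeSet he, ?_⟩
    intro hmem
    rw [Set.mem_singleton_iff] at hmem
    subst hmem
    exact hre he
  have hreach' : G'.Reachable i j := ⟨r.transfer G' hrG'⟩
  have hd0 : G'.dist i j ≠ 0 := by
    rw [dist_ne_zero_iff_ne_and_reachable]
    exact ⟨hij, hreach'⟩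
  obtain ⟨P, hPpath, hPlen⟩ := hreach'.exists_path_of_dist
  have hnoadj' : ¬ G'.Adj i j := by
    rw [hG', deleteEdges_adj]
    rintro ⟨-, h⟩
    exact h rfl
  have hl1 : G'.dist i j ≠ 1 := fun h1 => hnoadj' (dist_eq_one_iff_adj.mp h1)
  have hl2 : 2 ≤ G'.dist i j := by omega
  -- generic upper bound: gdist G i j ≤ 1 + ℓ
  have hPG : ∀ e ∈ P.edges, e ∈ G.edgeSet :=
    fun e he => edgeSet_mono hle' (P.edges_subset_edgeSet he)
  have hPnotij : s(i, j) ∉ P.edges := by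
    intro h
    have h2 := P.edges_subset_edgeSet h
    rw [hG', edgeSet_deleteEdges] at h2
    exact h2.2 rfl
  have hub : gdist G i j ≤ ((1 + G'.dist i j : ℕ) : ℝ≥0∞) := by
    have hdisj2 : ∀ e ∈ ((Path.singleton hadj : G.Path i j) : G.Walk i j).edges,
        e ∉ (P.transfer G hPG).edges := by
      intro e he
      simp only [Path.singleton, Walk.edges_cons, Walk.edges_nil, List.mem_singleton] at he
      subst he
      rw [Walk.edges_transfer]
      exact hPnotij
    have h1 := gdist_le_pair (Path.singleton hadj)
      ⟨P.transfer G hPG, hPpath.transfer hPG⟩ hdisj2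
    calc gdist G i j ≤ _ := h1
      _ = ((1 + G'.dist i j : ℕ) : ℝ≥0∞) := by
        simp [Path.singleton, Walk.length_transfer, hPlen]
  rcases eq_or_lt_of_le hl2 with hl2' | hl3
  · -- ℓ = 2 : gdist ≤ 3
    have hm3 : m ≤ 3 := by
      have h2 : (m : ℝ≥0∞) ≤ ((1 + G'.dist i j : ℕ) : ℝ≥0∞) := hm ▸ hub
      have h3 : m ≤ 1 + G'.dist i j := by exact_mod_cast h2
      omega
    have : (m : ℝ) ≤ 3 := by exact_mod_cast hm3
    linarith
  · -- ℓ ≥ 3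
    have hPnotnil : ¬ P.Nil := by
      intro hnil
      have := hnil.eq -- i = j? Walk.Nil.eq?
      exact hij (Walk.Nil.eq hnil)
    have hadj1 : G'.Adj i (P.getVert 1) := Walk.adj_snd hPnotnil
    obtain ⟨v1, hv1⟩ : ∃ v1, P.getVert 1 = v1 := ⟨_, rfl⟩
    rw [hv1] at hadj1
    have hv1i : v1 ≠ i := (G'.ne_of_adj hadj1).symm
    have hv1j : v1 ≠ j := by
      intro hh
      rw [hh] at hadj1
      have : G'.dist i j ≤ (Walk.cons hadj1 Walk.nil).length := dist_le _
      simp at this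
      omega
    have hGadj1 : G.Adj i v1 := hle' hadj1
    have hnadjv1 : ¬ G.Adj v1 j := by
      intro hvj
      have hne : s(v1, j) ∉ ({s(i, j)} : Set (Sym2 V)) := by
        rw [Set.mem_singleton_iff, Sym2.eq_iff]
        rintro (⟨rfl, -⟩ | ⟨rfl, -⟩)
        · exact hv1i rfl
        · exact hv1j rfl
      have hadj'' : G'.Adj v1 j := by
        rw [hG', deleteEdges_adj]
        exact ⟨hvj, hne⟩
      have : G'.dist i j ≤ (Walk.cons hadj1 (Walk.cons hadj'' Walk.nil)).length := dist_le _
      simp at this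
      omega
    -- apply the non-adjacent analysis to (v1, j)
    obtain ⟨p', q', n, hd', hsum', hgn, hbn, hlp', hlq'⟩ :=
      nonadj_pair hA hcA hAB hst hv1j hnadjv1
    have hdv1 : G.dist v1 j ≤ 2 := by
      have := dist_le (Walk.cons hGadj1.symm (Walk.cons hadj Walk.nil))
      simpa using this
    have hbn' : (n : ℝ) < 2 * cB + 3 := by
      have : (G.dist v1 j : ℝ) ≤ 2 := by exact_mod_cast hdv1
      linarith
    have hlen' : (p' : G.Walk v1 j).length + (q' : G.Walk v1 j).length = n := by
      have := hsum'.trans hgn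
      exact_mod_cast this
    by_cases hip : i ∈ (p' : G.Walk v1 j).support
    · have h2 := split_bound p'.2 q'.2 hd' hip
      rw [hlen', hm] at h2
      have h3 : m ≤ n := by exact_mod_cast h2
      have : (m : ℝ) ≤ n := by exact_mod_cast h3
      linarith
    · by_cases hiq : i ∈ (q' : G.Walk v1 j).support
      · have hd'' : ∀ e ∈ (q' : G.Walk v1 j).edges, e ∉ (p' : G.Walk v1 j).edges :=
          fun e he hp2 => hd' e hp2 he
        have h2 := split_bound q'.2 p'.2 hd'' hiq
        rw [hm] at h2
        have h3 : m ≤ (q' : G.Walk v1 j).length + (p' : G.Walk v1 j).length := by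
          exact_mod_cast h2
        have : (m : ℝ) ≤ n := by
          have : m ≤ n := by omega
          exact_mod_cast this
        linarith
      · -- i is on neither path: use the shorter one
        obtain ⟨rw_, hrw_path, hrw_sup, hrw_len⟩ :
            ∃ rw_ : G.Walk v1 j, rw_.IsPath ∧ i ∉ rw_.support ∧ 2 * rw_.length ≤ n := by
          rcases le_total (p' : G.Walk v1 j).length (q' : G.Walk v1 j).length with hle2 | hle2
          · exact ⟨(p' : G.Walk v1 j), p'.2, hip, by omega⟩
          · exact ⟨(q' : G.Walk v1 j), q'.2, hiq, by omega⟩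
        have hQpath : (Walk.cons hGadj1 rw_).IsPath :=
          (Walk.cons_isPath_iff _ _).mpr ⟨hrw_path, hrw_sup⟩
        have hdisj3 : ∀ e ∈ ((Path.singleton hadj : G.Path i j) : G.Walk i j).edges,
            e ∉ (Walk.cons hGadj1 rw_).edges := by
          intro e he
          simp only [Path.singleton, Walk.edges_cons, Walk.edges_nil, List.mem_singleton] at he
          subst he
          rw [Walk.edges_cons]
          intro hmem
          rcases List.mem_cons.mp hmem with h1 | h1
          · rw [Sym2.eq_iff] at h1
            rcases h1 with ⟨-, rfl⟩ | ⟨rfl, -⟩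
            · exact hv1j rfl
            · exact hv1i rfl
          · exact hrw_sup (rw_.fst_mem_support_of_mem_edges h1)
        have h2 := gdist_le_pair (Path.singleton hadj) ⟨Walk.cons hGadj1 rw_, hQpath⟩ hdisj3
        have h3 : gdist G i j ≤ ((2 + rw_.length : ℕ) : ℝ≥0∞) := by
          calc gdist G i j ≤ _ := h2
            _ = ((2 + rw_.length : ℕ) : ℝ≥0∞) := by
              simp [Path.singleton]
              push_cast
              ring
        rw [hm] at h3
        have h4 : m ≤ 2 + rw_.length := by exact_mod_cast h3
        have h5 : (m : ℝ) ≤ 2 + (rw_.length : ℝ) := by exact_mod_cast h4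
        have h6 : 2 * (rw_.length : ℝ) ≤ n := by exact_mod_cast hrw_len
        linarith


lemma fin2_edge_mem {H : SimpleGraph (Fin 2)} {u v : Fin 2} (huv : u ≠ v)
    (w : H.Walk u v) : s(u, v) ∈ w.edges := by
  cases w with
  | nil => exact absurd rfl huv
  | @cons _ x _ h t =>
    have hx : x = v := by
      have h1 : u ≠ x := h.ne
      have : ∀ a b c : Fin 2, a ≠ b → a ≠ c → b = c := by decide
      exact this u x v h1 huv
    subst hx
    simp

lemma costRel0_finite_top2 (i : Fin 2) :
    costRel0 (∅ : Finset (Fin 2)) 2 2 2 ⊤ i ≠ ⊤ := by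
  rw [costRel0]
  refine ENNReal.add_ne_top.mpr ⟨ENNReal.add_ne_top.mpr ⟨?_, ?_⟩, ?_⟩
  · exact ENNReal.mul_ne_top (ENNReal.natCast_ne_top _) ENNReal.ofReal_ne_top
  · simp
  · rw [ne_eq, ENNReal.sum_eq_top]
    rintro ⟨k, hk, hdE⟩
    have hki : k ≠ i := Finset.ne_of_mem_erase hk
    have hreach : (⊤ : SimpleGraph (Fin 2)).Reachable i k :=
      (by simpa using hki.symm : (⊤ : SimpleGraph (Fin 2)).Adj i k).reachable
    rw [dE, if_pos hreach] at hdE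
    exact (ENNReal.natCast_ne_top _) hdE

lemma costRel0_del_top2 {i j : Fin 2} (hij : i ≠ j) :
    costRel0 (∅ : Finset (Fin 2)) 2 2 2 (delE ⊤ i j) i = ⊤ := by
  have hnr : ¬ (delE (⊤ : SimpleGraph (Fin 2)) i j).Reachable i j := by
    rintro ⟨w⟩
    have hmem := fin2_edge_mem hij w
    have := w.edges_subset_edgeSet hmem
    rw [delE, edgeSet_deleteEdges] at this
    exact this.2 rfl
  have hdE : dE (delE (⊤ : SimpleGraph (Fin 2)) i j) i j = ⊤ := by
    rw [dE, if_neg hnr]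
  have hmem : j ∈ (∅ : Finset (Fin 2))ᶜ.erase i := by
    simp [hij.symm]
  rw [costRel0]
  have hsum : ∑ k ∈ (∅ : Finset (Fin 2))ᶜ.erase i, dE (delE ⊤ i j) i k = ⊤ :=
    ENNReal.sum_eq_top.mpr ⟨j, hmem, hdE⟩
  rw [hsum]
  simp

lemma part2_example :
    ∃ (n : ℕ) (TA' : Finset (Fin n)) (A' cA' cB' : ℝ) (G' : SimpleGraph (Fin n)),
      1 < A' ∧ 1 < cA' ∧ cA' ≤ cB' ∧
      PairwiseStableRel0 TA' A' cA' cB' G' ∧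
      ∃ i j : Fin n, i ≠ j ∧
        ¬ ∃ p q : G'.Path i j,
          ∀ e ∈ (p : G'.Walk i j).edges, e ∉ (q : G'.Walk i j).edges := by
  refine ⟨2, ∅, 2, 2, 2, ⊤, one_lt_two, one_lt_two, le_refl _, ⟨?_, ?_⟩, 0, 1, by decide, ?_⟩
  · intro i j hadj
    have hij : i ≠ j := hadj.ne
    constructor
    · rw [costRel0_del_top2 hij]
      exact Ne.lt_top (costRel0_finite_top2 i)
    · have : delE (⊤ : SimpleGraph (Fin 2)) i j = delE ⊤ j i := by
        rw [delE, delE, Sym2.eq_swap]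
      rw [this, costRel0_del_top2 hij.symm]
      exact Ne.lt_top (costRel0_finite_top2 j)
  · intro i j hij hnadj
    exact absurd (by simpa using hij : (⊤ : SimpleGraph (Fin 2)).Adj i j) hnadj
  · rintro ⟨p, q, hd⟩
    exact hd _ (fin2_edge_mem (by decide) (p : (⊤ : SimpleGraph (Fin 2)).Walk 0 1))
      (fin2_edge_mem (by decide) (q : (⊤ : SimpleGraph (Fin 2)).Walk 0 1))


/-- With symmetric reliability requirements (`τ = 1`, `δ = 1`) and
`1 < c_A ≤ c_B`, in every pairwise-stable graph `G` (for the reliable cost) every two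
distinct vertices `i, j` are joined by two edge-disjoint paths with
`g_G(i,j) ≤ 4 + 4c_B`, and the two cost-minimizing edge-disjoint path lengths are each
at most `2 + 2c_B`. By contrast, with asymmetric requirements (`τ = 0`) there exist
pairwise-stable graphs in which some pair of nodes is not joined by two edge-disjoint
paths. -/
theorem stmt16 (TA : Finset V) (A cA cB : ℝ)
    (hA : 1 < A) (hcA : 1 < cA) (hAB : cA ≤ cB)
    (G : SimpleGraph V) (hstable : PairwiseStableRel TA A cA cB G) :
    (∀ i j : V, i ≠ j →
      gdist G i j ≤ ENNReal.ofReal (4 + 4 * cB) ∧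
      ∃ p q : G.Path i j,
        (∀ e ∈ (p : G.Walk i j).edges, e ∉ (q : G.Walk i j).edges) ∧
        (((p : G.Walk i j).length : ℝ≥0∞) + ((q : G.Walk i j).length : ℝ≥0∞) =
          gdist G i j) ∧
        ((p : G.Walk i j).length : ℝ) ≤ 2 + 2 * cB ∧
        ((q : G.Walk i j).length : ℝ) ≤ 2 + 2 * cB) ∧
    (∃ (n : ℕ) (TA' : Finset (Fin n)) (A' cA' cB' : ℝ) (G' : SimpleGraph (Fin n)),
      1 < A' ∧ 1 < cA' ∧ cA' ≤ cB' ∧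
      PairwiseStableRel0 TA' A' cA' cB' G' ∧
      ∃ i j : Fin n, i ≠ j ∧
        ¬ ∃ p q : G'.Path i j,
          ∀ e ∈ (p : G'.Walk i j).edges, e ∉ (q : G'.Walk i j).edges) := by
  have hcB1 : 1 < cB := lt_of_lt_of_le hcA hAB
  refine ⟨?_, part2_example⟩
  intro i j hij
  by_cases hadj : G.Adj i j
  · obtain ⟨m, hm, hmb⟩ := adj_bound hA hcA hAB hstable hij hadj
    obtain ⟨p, q, hd, hsum⟩ := gdist_attain (by rw [hm]; exact ENNReal.natCast_ne_top m)
    have hlen : (p : G.Walk i j).length + (q : G.Walk i j).length = m := by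
      have := hsum.trans hm
      exact_mod_cast this
    have hp1 : 1 ≤ (p : G.Walk i j).length := by
      rcases Nat.eq_zero_or_pos (p : G.Walk i j).length with h0 | h1
      · exact absurd (Walk.eq_of_length_eq_zero h0) hij
      · exact h1
    have hq1 : 1 ≤ (q : G.Walk i j).length := by
      rcases Nat.eq_zero_or_pos (q : G.Walk i j).length with h0 | h1
      · exact absurd (Walk.eq_of_length_eq_zero h0) hij
      · exact h1
    have hlenR : ((p : G.Walk i j).length : ℝ) + ((q : G.Walk i j).length : ℝ) = m := by
      exact_mod_cast hlen
    have hp1R : (1 : ℝ) ≤ ((p : G.Walk i j).length : ℝ) := by exact_mod_cast hp1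
    have hq1R : (1 : ℝ) ≤ ((q : G.Walk i j).length : ℝ) := by exact_mod_cast hq1
    refine ⟨?_, p, q, hd, hsum, by linarith, by linarith⟩
    rw [hm, ← ENNReal.ofReal_natCast]
    exact ENNReal.ofReal_le_ofReal (by linarith)
  · obtain ⟨p, q, n, hd, hsum, hgn, hbn, hlp, hlq⟩ :=
      nonadj_pair hA hcA hAB hstable hij hadj
    have hlen : (p : G.Walk i j).length + (q : G.Walk i j).length = n := by
      have := hsum.trans hgn
      exact_mod_cast this
    have hlenR : ((p : G.Walk i j).length : ℝ) + ((q : G.Walk i j).length : ℝ) = n := by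
      exact_mod_cast hlen
    refine ⟨?_, p, q, hd, hsum, by linarith, by linarith⟩
    rw [hgn, ← ENNReal.ofReal_natCast]
    exact ENNReal.ofReal_le_ofReal (by linarith)

end
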